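/- Let G be a connected non-bipartite finite simple graph and suppose k ≡ 0 (mod 4). Then ρ^L(G^{k,k/2}) = ρ^Q(G^{k,k/2}), and the set of eigenvalues of L(G^{k,k/2}) equals the set of eigenvalues of Q(G^{k,k/2}). -/

import Mathlib

open scoped BigOperators
open Matrix

/-- `lam` is an eigenvalue of the Laplacian tensor `L(G^{k,k/2})` with eigenvector `x`. -/
def IsLapEigenpair {V : Type*} [Fintype V] [DecidableEq V] (k s : ℕ)
    (G : SimpleGraph V) [DecidableRel G.Adj]
    (lam : ℂ) (x : V × Fin s → ℂ) : Prop :=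
  x ≠ 0 ∧ ∀ (u : V) (v : Fin s),
    ((G.degree u : ℂ) - lam) * x (u, v) ^ (k - 1) =
      ∑ w ∈ G.neighborFinset u,
        (∏ p ∈ Finset.univ.erase v, x (u, p)) * ∏ q : Fin s, x (w, q)

/-- `lam` is an eigenvalue of the signless Laplacian tensor `Q(G^{k,k/2})` with
eigenvector `x`. -/
def IsSignlessLapEigenpair {V : Type*} [Fintype V] [DecidableEq V] (k s : ℕ)
    (G : SimpleGraph V) [DecidableRel G.Adj]
    (lam : ℂ) (x : V × Fin s → ℂ) : Prop :=
  x ≠ 0 ∧ ∀ (u : V) (v : Fin s),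
    (lam - (G.degree u : ℂ)) * x (u, v) ^ (k - 1) =
      ∑ w ∈ G.neighborFinset u,
        (∏ p ∈ Finset.univ.erase v, x (u, p)) * ∏ q : Fin s, x (w, q)

private lemma Ipow_sub_one' {k : ℕ} (hk : 4 ≤ k) (hk4 : 4 ∣ k) :
    Complex.I ^ (k - 1) = -Complex.I := by
  obtain ⟨m, rfl⟩ := hk4
  have hm : 4 * m - 1 = 4 * (m - 1) + 3 := by omega
  rw [hm, pow_add, pow_mul, Complex.I_pow_four, one_pow, one_mul]
  rw [pow_succ, Complex.I_sq]; ring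

private lemma eta_prod_erase' (s : ℕ) [NeZero s] (v : Fin s) (f : Fin s → ℂ) :
    ∏ p ∈ Finset.univ.erase v, ((if p = 0 then Complex.I else 1) * f p)
      = (if v = 0 then 1 else Complex.I) * ∏ p ∈ Finset.univ.erase v, f p := by
  rw [Finset.prod_mul_distrib]
  congr 1
  rw [Finset.prod_ite_eq' (Finset.univ.erase v) (0 : Fin s) (fun _ => Complex.I)]
  by_cases h : v = 0 <;> simp [h, Finset.mem_erase, Ne.symm]

/-- Generic transform: multiplying by `I` on the `0`-th coordinate of each half edge
flips the sign of the coefficient in the eigenvalue equation, provided `4 ∣ k`. -/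
private lemma transform' {V : Type*} [Fintype V] [DecidableEq V] (k s : ℕ) [NeZero s]
    (hk : 4 ≤ k) (hk4 : 4 ∣ k)
    (G : SimpleGraph V) [DecidableRel G.Adj] (c : V → ℂ) (x : V × Fin s → ℂ)
    (h : ∀ (u : V) (v : Fin s),
      c u * x (u, v) ^ (k - 1) =
        ∑ w ∈ G.neighborFinset u,
          (∏ p ∈ Finset.univ.erase v, x (u, p)) * ∏ q : Fin s, x (w, q)) :
    ∀ (u : V) (v : Fin s),
      (-(c u)) * ((fun a => (if a.2 = 0 then Complex.I else 1) * x a) (u, v)) ^ (k - 1) =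
        ∑ w ∈ G.neighborFinset u,
          (∏ p ∈ Finset.univ.erase v,
            (fun a => (if a.2 = 0 then Complex.I else 1) * x a) (u, p)) *
          ∏ q : Fin s, (fun a => (if a.2 = 0 then Complex.I else 1) * x a) (w, q) := by
  intro u v
  simp only
  have hq : ∀ w : V, ∏ q : Fin s, ((if q = (0 : Fin s) then Complex.I else 1) * x (w, q))
      = Complex.I * ∏ q : Fin s, x (w, q) := by
    intro w
    rw [Finset.prod_mul_distrib]
    congr 1
    rw [Finset.prod_ite_eq' Finset.univ (0 : Fin s) (fun _ => Complex.I)]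
    simp
  have hkey : (if v = 0 then 1 else Complex.I) * Complex.I
      = -((if v = (0 : Fin s) then Complex.I else 1) ^ (k - 1)) := by
    by_cases h0 : v = 0
    · simp [h0, Ipow_sub_one' hk hk4]
    · simp [h0, Complex.I_mul_I]
  calc (-(c u)) * ((if v = 0 then Complex.I else 1) * x (u, v)) ^ (k - 1)
      = -((if v = (0 : Fin s) then Complex.I else 1) ^ (k - 1)) * (c u * x (u, v) ^ (k - 1)) := by
        ring
    _ = ((if v = 0 then 1 else Complex.I) * Complex.I) *
          ∑ w ∈ G.neighborFinset u,
            (∏ p ∈ Finset.univ.erase v, x (u, p)) * ∏ q : Fin s, x (w, q) := by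
        rw [h u v, hkey]
    _ = _ := by
        rw [Finset.mul_sum]
        refine Finset.sum_congr rfl fun w _ => ?_
        rw [eta_prod_erase' s v (fun p => x (u, p)), hq w]
        ring

private lemma ynezero' {V : Type*} [Fintype V] [DecidableEq V] (s : ℕ) [NeZero s]
    (x : V × Fin s → ℂ) (hx : x ≠ 0) :
    (fun a : V × Fin s => (if a.2 = 0 then Complex.I else 1) * x a) ≠ 0 := by
  intro h0
  apply hx
  funext a
  have := congrFun h0 a
  by_cases h : a.2 = 0 <;> simp [h, Complex.I_ne_zero] at this <;> simp [this]

/-- If `G` is a connected non-bipartite simple graph and `4 ∣ k`, then the Laplacian and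
signless Laplacian tensors of `G^{k,k/2}` have the same spectral radius and the same
spectrum. -/
theorem stmt13 {V : Type*} [Fintype V] [DecidableEq V] (k s : ℕ)
    (hk : 4 ≤ k) (hks : k = 2 * s) (hk4 : 4 ∣ k)
    (G : SimpleGraph V) [DecidableRel G.Adj]
    (hconn : G.Connected) (hnb : ¬ G.Colorable 2) :
    sSup {r : ℝ | ∃ lam : ℂ,
        (∃ x : V × Fin s → ℂ, IsLapEigenpair k s G lam x) ∧ r = ‖lam‖} =
      sSup {r : ℝ | ∃ lam : ℂ,
        (∃ x : V × Fin s → ℂ, IsSignlessLapEigenpair k s G lam x) ∧ r = ‖lam‖} ∧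
    {lam : ℂ | ∃ x : V × Fin s → ℂ, IsLapEigenpair k s G lam x} =
      {lam : ℂ | ∃ x : V × Fin s → ℂ, IsSignlessLapEigenpair k s G lam x} := by
  haveI : NeZero s := ⟨by omega⟩
  have hiff : ∀ lam : ℂ, (∃ x : V × Fin s → ℂ, IsLapEigenpair k s G lam x) ↔
      (∃ x : V × Fin s → ℂ, IsSignlessLapEigenpair k s G lam x) := by
    intro lam
    constructor
    · rintro ⟨x, hx0, hx⟩
      refine ⟨_, ynezero' s x hx0, fun u v => ?_⟩
      have := transform' k s hk hk4 G (fun u => (G.degree u : ℂ) - lam) x hx u v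
      rw [show lam - (G.degree u : ℂ) = -((G.degree u : ℂ) - lam) by ring]
      exact this
    · rintro ⟨x, hx0, hx⟩
      refine ⟨_, ynezero' s x hx0, fun u v => ?_⟩
      have := transform' k s hk hk4 G (fun u => lam - (G.degree u : ℂ)) x hx u v
      rw [show (G.degree u : ℂ) - lam = -(lam - (G.degree u : ℂ)) by ring]
      exact this
  constructor
  · congr 1
    ext r
    simp only [Set.mem_setOf_eq, hiff]
  · ext lam
    simp only [Set.mem_setOf_eq, hiff]
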